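/- Let j ≥ 1 be an integer, δ > 0, and let f : ℝ^n → ℝ be j times continuously differentiable. Then the map x ↦ φ_{f,j}^δ(x) is continuous on ℝ^n. -/

import Mathlib

/-- Continuity of the order-`j` optimality measure: for `f : ℝⁿ → ℝ` of class
`C^j` (`j ≥ 1`) and `δ > 0`, the map
`x ↦ φ_{f,j}^δ(x) = sup_{‖d‖ ≤ δ} (−∑_{ℓ=1}^j (1/ℓ!) ∇^ℓ f(x)[d]^ℓ)`
is continuous. -/
theorem phi_continuous (n : ℕ) (j : ℕ) (hj : 1 ≤ j) (δ : ℝ) (hδ : 0 < δ)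
    (f : EuclideanSpace ℝ (Fin n) → ℝ) (hf : ContDiff ℝ j f) :
    Continuous (fun x : EuclideanSpace ℝ (Fin n) =>
      sSup {y : ℝ | ∃ d : EuclideanSpace ℝ (Fin n), ‖d‖ ≤ δ ∧
        y = -∑ ℓ ∈ Finset.Icc 1 j,
          (1 / (Nat.factorial ℓ : ℝ)) * iteratedFDeriv ℝ ℓ f x (fun _ => d)}) := by
  set F : EuclideanSpace ℝ (Fin n) → EuclideanSpace ℝ (Fin n) → ℝ := fun x d =>
    -∑ ℓ ∈ Finset.Icc 1 j,
      (1 / (Nat.factorial ℓ : ℝ)) * iteratedFDeriv ℝ ℓ f x (fun _ => d) with hF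
  have hset : ∀ x, {y : ℝ | ∃ d : EuclideanSpace ℝ (Fin n), ‖d‖ ≤ δ ∧ y = F x d}
      = F x '' Metric.closedBall 0 δ := by
    intro x
    ext y
    simp only [Set.mem_setOf_eq, Set.mem_image, Metric.mem_closedBall, dist_zero_right]
    constructor
    · rintro ⟨d, hd, rfl⟩; exact ⟨d, hd, rfl⟩
    · rintro ⟨d, hd, rfl⟩; exact ⟨d, hd, rfl⟩
  show Continuous (fun x : EuclideanSpace ℝ (Fin n) =>
    sSup {y : ℝ | ∃ d : EuclideanSpace ℝ (Fin n), ‖d‖ ≤ δ ∧ y = F x d})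
  simp only [hset]
  refine IsCompact.continuous_sSup (isCompact_closedBall 0 δ) ?_
  have hcont : Continuous ↿F := by
    apply Continuous.neg
    apply continuous_finset_sum
    intro ℓ hℓ
    apply Continuous.mul continuous_const
    have h1 : Continuous fun x : EuclideanSpace ℝ (Fin n) => iteratedFDeriv ℝ ℓ f x :=
      hf.continuous_iteratedFDeriv (by exact_mod_cast Finset.mem_Icc.mp hℓ |>.2)
    exact continuous_eval.comp
      ((h1.comp continuous_fst).prodMk (continuous_pi fun _ => continuous_snd))
  exact hcont
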